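/- In type A_2 (Cartan matrix a_{12} = a_{21} = -1): the Coxeter automorphism T = T_2 T_1 of Q(u_1, u_2) has order 5 on the set of cluster variables; explicitly the orbit of u_1 under T consists of exactly the five elements u_1, u_2, (u_2+1)/u_1, (u_1+u_2+1)/(u_1 u_2), (u_1+1)/u_2, and T^5(u_1) = u_1. -/

import Mathlib

set_option maxHeartbeats 1000000


open MvPolynomial

/-- in type `A₂` the Coxeter automorphism `T = T₂ ∘ T₁` of `ℚ(u₁,u₂)`
has order 5 on cluster variables: the orbit of `u₁` under `T` consists of exactly the
five cluster variables `u₁, u₂, (u₂+1)/u₁, (u₁+u₂+1)/(u₁u₂), (u₁+1)/u₂`, and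
`T⁵(u₁) = u₁`. -/
theorem A2_coxeter_orbit
    (u : Fin 2 → FractionRing (MvPolynomial (Fin 2) ℚ))
    (hu : ∀ j, u j = algebraMap (MvPolynomial (Fin 2) ℚ) _ (X j))
    (T1 T2 : RingAut (FractionRing (MvPolynomial (Fin 2) ℚ)))
    (hT1 : T1 (u 0) = (u 1 + 1) / u 0) (hT1' : T1 (u 1) = u 1)
    (hT2 : T2 (u 1) = (u 0 + 1) / u 1) (hT2' : T2 (u 0) = u 0)
    (T : RingAut (FractionRing (MvPolynomial (Fin 2) ℚ)))
    (hT : ∀ x, T x = T2 (T1 x)) :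
    (T ^ (5 : ℤ)) (u 0) = u 0 ∧
      Set.range (fun m : ℤ => (T ^ m) (u 0)) =
        {u 0, u 1, (u 1 + 1) / u 0, (u 0 + u 1 + 1) / (u 0 * u 1), (u 0 + 1) / u 1} := by
  have hinj : Function.Injective (algebraMap (MvPolynomial (Fin 2) ℚ) (FractionRing (MvPolynomial (Fin 2) ℚ))) :=
    IsFractionRing.injective _ _
  have hX : ∀ p : MvPolynomial (Fin 2) ℚ, p ≠ 0 → algebraMap (MvPolynomial (Fin 2) ℚ) (FractionRing (MvPolynomial (Fin 2) ℚ)) p ≠ 0 := by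
    intro p hp h
    exact hp (hinj (by simpa using h))
  have ha : u 0 ≠ 0 := by
    rw [hu 0]; exact hX _ (X_ne_zero 0)
  have hb : u 1 ≠ 0 := by
    rw [hu 1]; exact hX _ (X_ne_zero 1)
  have h1 : u 0 + 1 ≠ 0 := by
    rw [hu 0, show (1:FractionRing (MvPolynomial (Fin 2) ℚ)) = algebraMap (MvPolynomial (Fin 2) ℚ) (FractionRing (MvPolynomial (Fin 2) ℚ)) 1 from (map_one _).symm,
      ← map_add]
    exact hX _ (fun h => by simpa using congrArg (eval fun _ => (0:ℚ)) h)
  have h2 : u 1 + 1 ≠ 0 := by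
    rw [hu 1, show (1:FractionRing (MvPolynomial (Fin 2) ℚ)) = algebraMap (MvPolynomial (Fin 2) ℚ) (FractionRing (MvPolynomial (Fin 2) ℚ)) 1 from (map_one _).symm,
      ← map_add]
    exact hX _ (fun h => by simpa using congrArg (eval fun _ => (0:ℚ)) h)
  have h3 : u 0 + u 1 + 1 ≠ 0 := by
    rw [hu 0, hu 1, show (1:FractionRing (MvPolynomial (Fin 2) ℚ)) = algebraMap (MvPolynomial (Fin 2) ℚ) (FractionRing (MvPolynomial (Fin 2) ℚ)) 1 from (map_one _).symm,
      ← map_add, ← map_add]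
    exact hX _ (fun h => by simpa using congrArg (eval fun _ => (0:ℚ)) h)
  -- the five steps
  have e1 : T (u 0) = (u 0 + u 1 + 1) / (u 0 * u 1) := by
    rw [hT, hT1, map_div₀, map_add, map_one, hT2, hT2']
    field_simp
    ring
  have e2 : T (u 1) = (u 0 + 1) / u 1 := by
    rw [hT, hT1', hT2]
  have s3 : T1 ((u 0 + u 1 + 1) / (u 0 * u 1)) = (u 0 + 1) / u 1 := by
    rw [map_div₀, map_add, map_add, map_one, map_mul, hT1, hT1']
    field_simp
    ring
  have e3 : T ((u 0 + u 1 + 1) / (u 0 * u 1)) = u 1 := by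
    rw [hT, s3, map_div₀, map_add, map_one, hT2', hT2]
    field_simp
  have s4 : T1 ((u 0 + 1) / u 1) = (u 0 + u 1 + 1) / (u 0 * u 1) := by
    rw [map_div₀, map_add, map_one, hT1, hT1']
    field_simp
    ring
  have e4 : T ((u 0 + 1) / u 1) = (u 1 + 1) / u 0 := by
    rw [hT, s4, map_div₀, map_add, map_add, map_one, map_mul, hT2', hT2]
    field_simp
    ring
  have s5 : T1 ((u 1 + 1) / u 0) = u 0 := by
    rw [map_div₀, map_add, map_one, hT1, hT1']
    field_simp
  have e5 : T ((u 1 + 1) / u 0) = u 0 := by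
    rw [hT, s5, hT2']
  have step : ∀ (m : ℤ) (x : FractionRing (MvPolynomial (Fin 2) ℚ)), (T ^ (m + 1)) x = T ((T ^ m) x) := by
    intro m x
    rw [add_comm, zpow_one_add]
    rfl
  have v1 : (T ^ (1:ℤ)) (u 0) = (u 0 + u 1 + 1) / (u 0 * u 1) := by
    rw [zpow_one]; exact e1
  have v2 : (T ^ (2:ℤ)) (u 0) = u 1 := by
    rw [show (2:ℤ) = 1 + 1 by norm_num, step, v1]; exact e3
  have v3 : (T ^ (3:ℤ)) (u 0) = (u 0 + 1) / u 1 := by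
    rw [show (3:ℤ) = 2 + 1 by norm_num, step, v2]; exact e2
  have v4 : (T ^ (4:ℤ)) (u 0) = (u 1 + 1) / u 0 := by
    rw [show (4:ℤ) = 3 + 1 by norm_num, step, v3]; exact e4
  have v5 : (T ^ (5:ℤ)) (u 0) = u 0 := by
    rw [show (5:ℤ) = 4 + 1 by norm_num, step, v4]; exact e5
  have per : ∀ m : ℤ, (T ^ (m + 5)) (u 0) = (T ^ m) (u 0) := by
    intro m
    rw [zpow_add]
    show (T ^ m) ((T ^ (5:ℤ)) (u 0)) = _
    rw [v5]
  have fix : ∀ k : ℤ, (T ^ (5 * k)) (u 0) = u 0 := by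
    intro k
    induction k using Int.induction_on with
    | zero =>
        rw [mul_zero, zpow_zero]
        rfl
    | succ k ih =>
        rw [show 5 * ((k:ℤ) + 1) = 5 * k + 5 by ring, per]
        exact ih
    | pred k ih =>
        have h := per (5 * (-(k:ℤ) - 1))
        rw [show 5 * (-(k:ℤ) - 1) + 5 = 5 * (-(k:ℤ)) by ring] at h
        rw [show (-(k:ℤ) - 1) = (-(k:ℤ) - 1) from rfl]
        calc (T ^ (5 * (-(k:ℤ) - 1))) (u 0) = (T ^ (5 * (-(k:ℤ)))) (u 0) := h.symm
          _ = u 0 := ih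
  have hmod : ∀ m : ℤ, (T ^ m) (u 0) = (T ^ (m % 5)) (u 0) := by
    intro m
    conv_lhs => rw [show m = m % 5 + 5 * (m / 5) by omega]
    rw [zpow_add]
    show (T ^ (m % 5)) ((T ^ (5 * (m / 5))) (u 0)) = _
    rw [fix]
  refine ⟨v5, ?_⟩
  ext x
  constructor
  · rintro ⟨m, rfl⟩
    simp only
    rw [hmod m]
    have h5 : m % 5 = 0 ∨ m % 5 = 1 ∨ m % 5 = 2 ∨ m % 5 = 3 ∨ m % 5 = 4 := by omega
    rcases h5 with h | h | h | h | h <;> rw [h] <;>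
        simp only [Set.mem_insert_iff, Set.mem_singleton_iff]
    · exact Or.inl (by rw [zpow_zero]; rfl)
    · exact Or.inr (Or.inr (Or.inr (Or.inl v1)))
    · exact Or.inr (Or.inl v2)
    · exact Or.inr (Or.inr (Or.inr (Or.inr v3)))
    · exact Or.inr (Or.inr (Or.inl v4))
  · intro hx
    rcases hx with h | h | h | h | h
    · exact ⟨0, by show (T ^ (0:ℤ)) (u 0) = x; rw [zpow_zero, h]; rfl⟩
    · exact ⟨2, by show (T ^ (2:ℤ)) (u 0) = x; rw [v2]; exact h.symm⟩
    · exact ⟨4, by show (T ^ (4:ℤ)) (u 0) = x; rw [v4]; exact h.symm⟩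
    · exact ⟨1, by show (T ^ (1:ℤ)) (u 0) = x; rw [v1]; exact h.symm⟩
    · exact ⟨3, by show (T ^ (3:ℤ)) (u 0) = x; rw [v3]; exact h.symm⟩
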